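/- Let a ≥ 2, c ≥ 1 and k ≥ 1 be integers. In the field ℂ(z,w) of rational functions in two variables over ℂ, let L be the subfield generated over ℂ by z^a and z^c w + z^k. Then ℂ(z,w) is a finite extension of L of degree exactly a. -/

import Mathlib

open MvPolynomial

section CoreLemmas
open Polynomial

lemma expand_sum_eq_zero {a : ℕ} (ha : 0 < a) (g : Fin a → Polynomial ℂ)
    (h : ∑ i : Fin a, (expand ℂ a (g i)) * Polynomial.X ^ (i : ℕ) = 0) : ∀ i, g i = 0 := by
  intro i
  ext m
  have hcoeff := congrArg (fun p => Polynomial.coeff p (a * m + (i : ℕ))) h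
  simp only [finset_sum_coeff, Polynomial.coeff_zero] at hcoeff
  rw [Finset.sum_eq_single i] at hcoeff
  · rw [coeff_mul_X_pow', if_pos (by omega), Nat.add_sub_cancel, coeff_expand ha,
      if_pos (Dvd.intro m rfl), Nat.mul_div_cancel_left m ha] at hcoeff
    simpa using hcoeff
  · intro j _ hji
    rw [coeff_mul_X_pow']
    split_ifs with hle
    · rw [coeff_expand ha, if_neg]
      intro hdvd
      obtain ⟨e, he⟩ := hdvd
      have h1 : a * m + (i : ℕ) = a * e + (j : ℕ) := by omega
      have h2 : (a * m + (i : ℕ)) % a = (a * e + (j : ℕ)) % a := by rw [h1]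
      rw [Nat.mul_add_mod, Nat.mul_add_mod, Nat.mod_eq_of_lt i.isLt,
        Nat.mod_eq_of_lt j.isLt] at h2
      exact hji (Fin.ext h2.symm)
    · rfl
  · intro hmem; exact absurd (Finset.mem_univ i) hmem

/-- Core lemma: if `∑ i<a, P_i(z^a, z^c w + z^k) z^i = 0` in `ℂ[z,w]` then all `P_i = 0`. -/
lemma core_lemma {a c k : ℕ} (ha : 0 < a) (P : Fin a → MvPolynomial (Fin 2) ℂ)
    (h : ∑ i : Fin a, (aeval ![(X 0 : MvPolynomial (Fin 2) ℂ) ^ a,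
        X 0 ^ c * X 1 + X 0 ^ k] (P i)) * X 0 ^ (i : ℕ) = 0) :
    ∀ i, P i = 0 := by
  set F := RatFunc ℂ
  set Ψ : MvPolynomial (Fin 2) ℂ →ₐ[ℂ] MvPolynomial (Fin 2) ℂ :=
    aeval ![(X 0 : MvPolynomial (Fin 2) ℂ) ^ a, X 0 ^ c * X 1 + X 0 ^ k] with hΨ
  set θ : MvPolynomial (Fin 2) ℂ →ₐ[ℂ] Polynomial F :=
    aeval ![Polynomial.C RatFunc.X,
      Polynomial.C ((RatFunc.X ^ c)⁻¹) * (Polynomial.X - Polynomial.C (RatFunc.X ^ k))] with hθ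
  set σ : MvPolynomial (Fin 2) ℂ →ₐ[ℂ] Polynomial (Polynomial ℂ) :=
    aeval ![Polynomial.C Polynomial.X, Polynomial.X] with hσ
  set μ : Polynomial ℂ →+* F :=
    (algebraMap (Polynomial ℂ) F).comp (Polynomial.expand ℂ a).toRingHom with hμ
  have hμC : ∀ q : Polynomial ℂ, μ q = algebraMap (Polynomial ℂ) F (Polynomial.expand ℂ a q) :=
    fun q => rfl
  -- key identity : θ ∘ Ψ = map μ ∘ σ
  have key : ∀ p : MvPolynomial (Fin 2) ℂ, θ (Ψ p) = Polynomial.map μ (σ p) := by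
    intro p
    have hcomp : (θ.toRingHom.comp Ψ.toRingHom : MvPolynomial (Fin 2) ℂ →+* Polynomial F)
        = (Polynomial.mapRingHom μ).comp σ.toRingHom := by
      apply MvPolynomial.ringHom_ext
      · intro r
        simp only [hΨ, hθ, hσ, RingHom.comp_apply, AlgHom.toRingHom_eq_coe,
          RingHom.coe_coe, MvPolynomial.aeval_C, coe_mapRingHom]
        rw [AlgHom.commutes, Polynomial.algebraMap_apply, Polynomial.algebraMap_apply,
          Polynomial.map_C, hμC, AlgHom.commutes (Polynomial.expand ℂ a),
          ← IsScalarTower.algebraMap_apply ℂ (Polynomial ℂ) F]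
      · intro i
        fin_cases i
        · simp only [hΨ, hθ, hσ, Fin.mk_zero, Fin.isValue, RingHom.comp_apply,
            AlgHom.toRingHom_eq_coe, RingHom.coe_coe, MvPolynomial.aeval_X,
            Matrix.cons_val_zero, map_pow, coe_mapRingHom, Polynomial.map_C]
          rw [hμC, Polynomial.expand_X, map_pow, RatFunc.algebraMap_X, Polynomial.C_pow]
        · have hXc : (RatFunc.X : F) ^ c ≠ 0 := pow_ne_zero _ RatFunc.X_ne_zero
          simp only [hΨ, hθ, hσ, Fin.mk_one, Fin.isValue, RingHom.comp_apply,
            AlgHom.toRingHom_eq_coe, RingHom.coe_coe, MvPolynomial.aeval_X,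
            Matrix.cons_val_one, Matrix.head_cons, map_add, map_mul, map_pow,
            Matrix.cons_val_zero, coe_mapRingHom, Polynomial.map_X]
          rw [show (Polynomial.C RatFunc.X : Polynomial F) ^ c = Polynomial.C (RatFunc.X ^ c)
              from (Polynomial.C_pow).symm,
            ← mul_assoc, ← Polynomial.C_mul, mul_inv_cancel₀ hXc, Polynomial.C_1, one_mul]
          ring
    exact congrFun (congrArg (fun f => f.toFun) hcomp) p
  -- σ is injective
  have hσinj : Function.Injective σ := by
    set τ : Polynomial (Polynomial ℂ) →+* MvPolynomial (Fin 2) ℂ :=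
      Polynomial.eval₂RingHom ((Polynomial.aeval (X 0 : MvPolynomial (Fin 2) ℂ)).toRingHom)
        (X 1) with hτ
    have hτσ : ∀ p, τ (σ p) = p := by
      intro p
      have hcomp2 : (τ.comp σ.toRingHom : MvPolynomial (Fin 2) ℂ →+* MvPolynomial (Fin 2) ℂ)
          = RingHom.id _ := by
        apply MvPolynomial.ringHom_ext
        · intro r
          simp only [hσ, hτ, RingHom.comp_apply, AlgHom.toRingHom_eq_coe, RingHom.coe_coe,
            MvPolynomial.aeval_C, Polynomial.algebraMap_apply, Algebra.algebraMap_self,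
            RingHom.id_apply, coe_eval₂RingHom, Polynomial.eval₂_C, Polynomial.aeval_C,
            MvPolynomial.algebraMap_eq]
        · intro i
          fin_cases i
          · simp only [hσ, hτ, Fin.mk_zero, Fin.isValue, RingHom.comp_apply,
              AlgHom.toRingHom_eq_coe, RingHom.coe_coe, MvPolynomial.aeval_X,
              Matrix.cons_val_zero, coe_eval₂RingHom, Polynomial.eval₂_C,
              Polynomial.aeval_X, RingHom.id_apply]
          · simp only [hσ, hτ, Fin.mk_one, Fin.isValue, RingHom.comp_apply,
              AlgHom.toRingHom_eq_coe, RingHom.coe_coe, MvPolynomial.aeval_X,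
              Matrix.cons_val_one, Matrix.head_cons, coe_eval₂RingHom,
              Polynomial.eval₂_X, RingHom.id_apply, Matrix.cons_val_zero]
      exact congrFun (congrArg (fun f => f.toFun) hcomp2) p
    intro p q hpq
    rw [← hτσ p, ← hτσ q, hpq]
  -- apply θ to the hypothesis
  have h2 : ∑ i : Fin a, Polynomial.map μ (σ (P i)) * (Polynomial.C RatFunc.X) ^ (i : ℕ)
      = 0 := by
    have h2' := congrArg θ h
    rw [map_sum, map_zero] at h2'
    rw [← h2']
    apply Finset.sum_congr rfl
    intro i _
    rw [map_mul, map_pow, key]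
    congr 2
    rw [hθ, MvPolynomial.aeval_X, Matrix.cons_val_zero]
  intro i
  apply hσinj
  rw [map_zero]
  refine Polynomial.ext fun n => ?_
  rw [Polynomial.coeff_zero]
  have h3 : ∑ j : Fin a, μ ((σ (P j)).coeff n) * RatFunc.X ^ (j : ℕ) = 0 := by
    have h3' := congrArg (fun p => Polynomial.coeff p n) h2
    simp only [Polynomial.finset_sum_coeff, Polynomial.coeff_zero] at h3'
    rw [← h3']
    apply Finset.sum_congr rfl
    intro j _
    rw [← Polynomial.C_pow, Polynomial.coeff_mul_C, Polynomial.coeff_map]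
  have h4 : ∑ j : Fin a, Polynomial.expand ℂ a ((σ (P j)).coeff n) * Polynomial.X ^ (j : ℕ)
      = 0 := by
    apply IsFractionRing.injective (Polynomial ℂ) F
    rw [map_sum, map_zero, ← h3]
    apply Finset.sum_congr rfl
    intro j _
    rw [map_mul, map_pow, RatFunc.algebraMap_X, hμC]
  exact expand_sum_eq_zero ha (fun j => (σ (P j)).coeff n) h4 i

end CoreLemmas

set_option maxHeartbeats 1000000
set_option synthInstance.maxHeartbeats 400000

/-- In `ℂ(z,w)`, the fraction field of `ℂ[z,w]`, let `L` be the subfield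
generated over `ℂ` by `z^a` and `z^c w + z^k`, where `a ≥ 2`, `c ≥ 1`, `k ≥ 1` are integers.
Then `ℂ(z,w)` is a finite extension of `L` of degree exactly `a`. -/
theorem degree_over_class_four_subfield
    (a c k : ℕ) (ha : 2 ≤ a) (hc : 1 ≤ c) (hk : 1 ≤ k)
    (z w : FractionRing (MvPolynomial (Fin 2) ℂ))
    (hz : z = algebraMap (MvPolynomial (Fin 2) ℂ) _ (X 0))
    (hw : w = algebraMap (MvPolynomial (Fin 2) ℂ) _ (X 1))
    (L : IntermediateField ℂ (FractionRing (MvPolynomial (Fin 2) ℂ)))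
    (hL : L = IntermediateField.adjoin ℂ ({z ^ a, z ^ c * w + z ^ k} :
      Set (FractionRing (MvPolynomial (Fin 2) ℂ)))) :
    FiniteDimensional L (FractionRing (MvPolynomial (Fin 2) ℂ)) ∧
    Module.finrank L (FractionRing (MvPolynomial (Fin 2) ℂ)) = a := by
  have hz0 : z ≠ 0 := by
    rw [hz]
    intro hzero
    exact MvPolynomial.X_ne_zero 0 (IsFractionRing.to_map_eq_zero_iff.mp hzero)
  have hu : z ^ a ∈ L := hL ▸ IntermediateField.subset_adjoin ℂ _ (Set.mem_insert _ _)
  have hv : z ^ c * w + z ^ k ∈ L :=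
    hL ▸ IntermediateField.subset_adjoin ℂ _ (Set.mem_insert_of_mem _ rfl)
  have hcoe : (algebraMap L (FractionRing (MvPolynomial (Fin 2) ℂ))) ⟨z ^ a, hu⟩ = z ^ a :=
    IntermediateField.algebraMap_apply L (⟨z ^ a, hu⟩ : L)
  -- z is integral over L
  have haez : Polynomial.aeval z (Polynomial.X ^ a - Polynomial.C (⟨z ^ a, hu⟩ : L)) = 0 := by
    rw [map_sub, map_pow, Polynomial.aeval_X, Polynomial.aeval_C, hcoe, sub_self]
  have hzint : IsIntegral L z :=
    ⟨Polynomial.X ^ a - Polynomial.C (⟨z ^ a, hu⟩ : L),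
      Polynomial.monic_X_pow_sub_C _ (by omega), haez⟩
  -- the adjoin of z over L is everything
  set E := IntermediateField.adjoin L ({z} : Set (FractionRing (MvPolynomial (Fin 2) ℂ))) with hE
  have hzE : z ∈ E := IntermediateField.subset_adjoin _ _ rfl
  have hvE : z ^ c * w + z ^ k ∈ E := by
    have h := E.algebraMap_mem ⟨z ^ c * w + z ^ k, hv⟩
    rwa [IntermediateField.algebraMap_apply] at h
  have hwE : w ∈ E := by
    have hrw : w = (z ^ c * w + z ^ k - z ^ k) * (z ^ c)⁻¹ := by
      rw [add_sub_cancel_right, mul_comm (z ^ c) w, mul_assoc,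
        mul_inv_cancel₀ (pow_ne_zero c hz0), mul_one]
    rw [hrw]
    exact mul_mem (sub_mem hvE (pow_mem hzE k)) (inv_mem (pow_mem hzE c))
  have halg : ∀ p : MvPolynomial (Fin 2) ℂ, algebraMap (MvPolynomial (Fin 2) ℂ) (FractionRing (MvPolynomial (Fin 2) ℂ)) p ∈ E := by
    intro p
    induction p using MvPolynomial.induction_on with
    | C r =>
      rw [show (MvPolynomial.C r : MvPolynomial (Fin 2) ℂ) = algebraMap ℂ (MvPolynomial (Fin 2) ℂ) r from rfl,
        ← IsScalarTower.algebraMap_apply ℂ (MvPolynomial (Fin 2) ℂ) (FractionRing (MvPolynomial (Fin 2) ℂ)),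
        IsScalarTower.algebraMap_apply ℂ L (FractionRing (MvPolynomial (Fin 2) ℂ))]
      exact E.algebraMap_mem _
    | add p q hp hq => rw [map_add]; exact add_mem hp hq
    | mul_X p i hp =>
      rw [map_mul]
      refine mul_mem hp ?_
      fin_cases i
      · simp only [Fin.zero_eta, Fin.isValue]
        rw [← hz]; exact hzE
      · simp only [Fin.mk_one, Fin.isValue]
        rw [← hw]; exact hwE
  have hEtop : E = ⊤ := by
    rw [eq_top_iff]
    intro x _
    obtain ⟨p, q, hq, hx⟩ := IsFractionRing.div_surjective (A := MvPolynomial (Fin 2) ℂ) x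
    rw [← hx]
    exact div_mem (halg p) (halg q)
  haveI hfinE : FiniteDimensional L E := IntermediateField.adjoin.finiteDimensional hzint
  haveI hfin : FiniteDimensional L (FractionRing (MvPolynomial (Fin 2) ℂ)) := by
    rw [hEtop] at hfinE
    exact (IntermediateField.topEquiv (F := L) (E := FractionRing (MvPolynomial (Fin 2) ℂ))).toLinearEquiv.finiteDimensional
  have hrank : Module.finrank L (FractionRing (MvPolynomial (Fin 2) ℂ)) = (minpoly L z).natDegree := by
    have h1 : Module.finrank L E = (minpoly L z).natDegree :=
      IntermediateField.adjoin.finrank hzint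
    rw [← h1, hEtop]
    exact (IntermediateField.topEquiv (F := L) (E := FractionRing (MvPolynomial (Fin 2) ℂ))).toLinearEquiv.finrank_eq.symm
  -- upper bound
  have hle : (minpoly L z).natDegree ≤ a := by
    have hdvd := minpoly.dvd L z haez
    have hne : (Polynomial.X ^ a - Polynomial.C (⟨z ^ a, hu⟩ : L)) ≠ 0 :=
      (Polynomial.monic_X_pow_sub_C _ (by omega : a ≠ 0)).ne_zero
    have := Polynomial.natDegree_le_of_dvd hdvd hne
    rwa [Polynomial.natDegree_X_pow_sub_C] at this
  -- lower bound : linear independence of 1, z, ..., z^(a-1)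
  set Φ : MvPolynomial (Fin 2) ℂ →ₐ[ℂ] FractionRing (MvPolynomial (Fin 2) ℂ) := aeval ![z ^ a, z ^ c * w + z ^ k] with hΦ
  have hrep : ∀ x : FractionRing (MvPolynomial (Fin 2) ℂ), x ∈ L → ∃ p q : MvPolynomial (Fin 2) ℂ, Φ q ≠ 0 ∧ x * Φ q = Φ p := by
    intro x hx
    rw [hL, show ({z ^ a, z ^ c * w + z ^ k} : Set (FractionRing (MvPolynomial (Fin 2) ℂ)))
        = Set.range ![z ^ a, z ^ c * w + z ^ k] by
      simp [Matrix.range_cons, Matrix.range_empty, Set.pair_comm]] at hx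
    obtain ⟨r, s, hx⟩ := (IntermediateField.mem_adjoin_range_iff ℂ _ x).mp hx
    by_cases hs : Φ s = 0
    · refine ⟨0, 1, ?_, ?_⟩
      · rw [map_one]; exact one_ne_zero
      · rw [map_one, map_zero, mul_one, hx, hΦ] at *
        rw [hx, hs, div_zero]
    · exact ⟨r, s, hs, by rw [hx, ← hΦ]; field_simp⟩
  have hli : LinearIndependent L (fun i : Fin a => z ^ (i : ℕ)) := by
    rw [Fintype.linearIndependent_iff]
    intro g hg
    choose p q hq hpq using fun i : Fin a => hrep (g i) (g i).2
    set P : Fin a → MvPolynomial (Fin 2) ℂ := fun i => p i * ∏ j ∈ Finset.univ.erase i, q j with hP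
    have hsum : ∑ i : Fin a, Φ (P i) * z ^ (i : ℕ) = 0 := by
      have hg' : ∑ i : Fin a, (g i : FractionRing (MvPolynomial (Fin 2) ℂ)) * z ^ (i : ℕ) = 0 := by
        rw [← hg]
        exact Finset.sum_congr rfl fun i _ => rfl
      have hmul : (∑ i : Fin a, (g i : FractionRing (MvPolynomial (Fin 2) ℂ)) * z ^ (i : ℕ)) * Φ (∏ j, q j) = 0 := by
        rw [hg', zero_mul]
      rw [← hmul, Finset.sum_mul]
      apply Finset.sum_congr rfl
      intro i _
      rw [hP, map_mul]
      have herase : Φ (∏ j, q j) = Φ (q i) * Φ (∏ j ∈ Finset.univ.erase i, q j) := by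
        rw [← map_mul, Finset.mul_prod_erase _ _ (Finset.mem_univ i)]
      rw [herase, ← hpq i]
      ring
    -- transfer to MvPolynomial
    set Ψ : MvPolynomial (Fin 2) ℂ →ₐ[ℂ] MvPolynomial (Fin 2) ℂ := aeval ![(X 0 : MvPolynomial (Fin 2) ℂ) ^ a, X 0 ^ c * X 1 + X 0 ^ k] with hΨ
    have hKΨ : ∀ r : MvPolynomial (Fin 2) ℂ, Φ r = algebraMap (MvPolynomial (Fin 2) ℂ) (FractionRing (MvPolynomial (Fin 2) ℂ)) (Ψ r) := by
      intro r
      have hcomp : Φ = (IsScalarTower.toAlgHom ℂ (MvPolynomial (Fin 2) ℂ) (FractionRing (MvPolynomial (Fin 2) ℂ))).comp Ψ := by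
        apply MvPolynomial.algHom_ext
        intro i
        fin_cases i
        · simp only [hΦ, hΨ, Fin.mk_zero, Fin.isValue, AlgHom.comp_apply, aeval_X,
            Matrix.cons_val_zero, map_pow, IsScalarTower.coe_toAlgHom']
          rw [hz]
        · simp only [hΦ, hΨ, Fin.mk_one, Fin.isValue, AlgHom.comp_apply, aeval_X,
            Matrix.cons_val_one, Matrix.head_cons, map_add, map_mul, map_pow,
            Matrix.cons_val_zero, IsScalarTower.coe_toAlgHom']
          rw [hz, hw]
      rw [hcomp]; rfl
    have hMv : ∑ i : Fin a, Ψ (P i) * (X 0 : MvPolynomial (Fin 2) ℂ) ^ (i : ℕ) = 0 := by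
      apply IsFractionRing.injective (MvPolynomial (Fin 2) ℂ) (FractionRing (MvPolynomial (Fin 2) ℂ))
      rw [map_sum, map_zero, ← hsum]
      apply Finset.sum_congr rfl
      intro i _
      rw [map_mul, map_pow, ← hKΨ, ← hz]
    have hPzero : ∀ i, P i = 0 := core_lemma (by omega) P (by rw [← hΨ]; exact hMv)
    intro i
    have hΦP : Φ (P i) = 0 := by rw [hPzero i, map_zero]
    rw [hP, map_mul] at hΦP
    have hprod : Φ (∏ j ∈ Finset.univ.erase i, q j) ≠ 0 := by
      rw [map_prod]
      exact Finset.prod_ne_zero_iff.mpr fun j _ => hq j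
    have hpzero : Φ (p i) = 0 := by
      rcases mul_eq_zero.mp hΦP with h | h
      · exact h
      · exact absurd h hprod
    have : (g i : FractionRing (MvPolynomial (Fin 2) ℂ)) * Φ (q i) = 0 := by rw [hpq i, hpzero]
    rcases mul_eq_zero.mp this with h | h
    · exact Subtype.ext h
    · exact absurd h (hq i)
  have hge : a ≤ Module.finrank L (FractionRing (MvPolynomial (Fin 2) ℂ)) := by
    have := hli.fintype_card_le_finrank
    simpa using this
  exact ⟨hfin, le_antisymm (hrank ▸ hle) hge⟩
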